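/- Let n be even and let M_1, ..., M_k be pairwise edge-disjoint perfect matchings in K_n. Then for any two distinct vertices u, v of the graph G obtained from K_n by deleting all edges of the M_i, there exist at least n-1-2k pairwise edge-disjoint paths between u and v in G; in particular G is (n-1-2k)-edge-connected when n-1-2k > 0. -/

import Mathlib

/-- A graph is `m`-edge-connected: removing any finite set of fewer than `m` edges
leaves it connected. -/
def IsEdgeConnected {V : Type} (G : SimpleGraph V) (m : ℕ) : Prop :=
  ∀ S : Set (Sym2 V), S.Finite → S.ncard < m → (G.deleteEdges S).Connected

open SimpleGraph Finset in
private lemma exists_path_spec {V : Type} (G : SimpleGraph V) (u v w : V)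
    (huv : u ≠ v) (hwu : w ≠ u)
    (h : (w = v ∧ G.Adj u v) ∨ (w ≠ v ∧ G.Adj u w ∧ G.Adj w v)) :
    ∃ q : G.Walk u v, q.IsPath ∧
      ((w = v ∧ q.edges = [s(u,v)]) ∨ (w ≠ v ∧ q.edges = [s(u,w), s(w,v)])) := by
  rcases h with ⟨rfl, hadj⟩ | ⟨hwv, h1, h2⟩
  · exact ⟨Walk.cons hadj Walk.nil, by simp [Walk.cons_isPath_iff, huv],
      Or.inl ⟨rfl, by simp⟩⟩
  · refine ⟨Walk.cons h1 (Walk.cons h2 Walk.nil), ?_, Or.inr ⟨hwv, by simp⟩⟩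
    simp [Walk.cons_isPath_iff, Ne.symm hwu, huv, hwv.symm, Ne.symm hwv]
    tauto

open SimpleGraph Finset in
private lemma edges_disj {V : Type} {G : SimpleGraph V} {u v w₁ w₂ : V}
    (huv : u ≠ v) (hw : w₁ ≠ w₂) (hw1u : w₁ ≠ u) (hw2u : w₂ ≠ u)
    {q₁ q₂ : G.Walk u v}
    (h1 : (w₁ = v ∧ q₁.edges = [s(u,v)]) ∨ (w₁ ≠ v ∧ q₁.edges = [s(u,w₁), s(w₁,v)]))
    (h2 : (w₂ = v ∧ q₂.edges = [s(u,v)]) ∨ (w₂ ≠ v ∧ q₂.edges = [s(u,w₂), s(w₂,v)])) :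
    List.Disjoint q₁.edges q₂.edges := by
  rcases h1 with ⟨rfl, e1⟩ | ⟨hv1, e1⟩ <;> rcases h2 with ⟨h2v, e2⟩ | ⟨hv2, e2⟩ <;>
    rw [e1, e2] <;> simp [List.disjoint_left, Sym2.eq_iff] <;> tauto

theorem deleteMatchings_edge_disjoint_paths (n k : ℕ) (hn : Even n)
    (M : Fin k → (⊤ : SimpleGraph (Fin n)).Subgraph)
    (hpm : ∀ i, (M i).IsPerfectMatching)
    (hdisj : ∀ i j, i ≠ j → Disjoint (M i).edgeSet (M j).edgeSet) :
    (∀ u v : Fin n, u ≠ v →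
      ∃ p : Fin (n - 1 - 2 * k) →
          ((⊤ : SimpleGraph (Fin n)).deleteEdges (⋃ i, (M i).edgeSet)).Walk u v,
        (∀ i, (p i).IsPath) ∧
        ∀ i j, i ≠ j → List.Disjoint (p i).edges (p j).edges) ∧
    (0 < n - 1 - 2 * k →
      IsEdgeConnected ((⊤ : SimpleGraph (Fin n)).deleteEdges (⋃ i, (M i).edgeSet))
        (n - 1 - 2 * k)) := by
  classical
  set E : Set (Sym2 (Fin n)) := ⋃ i, (M i).edgeSet with hE
  set G : SimpleGraph (Fin n) := (⊤ : SimpleGraph (Fin n)).deleteEdges E with hG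
  set needed := n - 1 - 2 * k with hneeded
  -- counting: each vertex has at most k non-neighbors (other than itself)
  have hbad : ∀ u : Fin n,
      (Finset.univ.filter (fun w => w ≠ u ∧ ¬ G.Adj u w)).card ≤ k := by
    intro u
    have hex : ∀ w ∈ Finset.univ.filter (fun w => w ≠ u ∧ ¬ G.Adj u w),
        ∃ i : Fin k, (M i).Adj u w := by
      intro w hw
      simp only [Finset.mem_filter, Finset.mem_univ, true_and] at hw
      obtain ⟨hne, hnadj⟩ := hw
      have hmem : s(u, w) ∈ E := by
        by_contra hc
        exact hnadj (by simp [hG, SimpleGraph.deleteEdges_adj, hne.symm, hc])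
      simpa only [hE, Set.mem_iUnion, SimpleGraph.Subgraph.mem_edgeSet] using hmem
    set f : Fin n → ℕ := fun w =>
      if h : ∃ i : Fin k, (M i).Adj u w then (h.choose : ℕ) else 0 with hf
    have := Finset.card_le_card_of_injOn f (t := Finset.range k)
      (fun w hw => by
        have h := hex w hw
        simp only [hf, dif_pos h, Finset.mem_coe, Finset.mem_range]
        exact h.choose.2)
      (fun w₁ hw₁ w₂ hw₂ heq => by
        simp only [Finset.coe_filter, Set.mem_setOf_eq] at hw₁ hw₂
        have h₁ := hex w₁ (by simpa using hw₁)
        have h₂ := hex w₂ (by simpa using hw₂)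
        simp only [hf, dif_pos h₁, dif_pos h₂] at heq
        have hii : h₁.choose = h₂.choose := Fin.val_injective heq
        have a₁ := h₁.choose_spec
        have a₂ := h₂.choose_spec
        rw [hii] at a₁
        exact ((hpm h₂.choose).1 ((hpm h₂.choose).2 u)).unique a₁ a₂)
    simpa using this
  have main : ∀ u v : Fin n, u ≠ v →
      ∃ p : Fin needed → G.Walk u v,
        (∀ i, (p i).IsPath) ∧
        ∀ i j, i ≠ j → List.Disjoint (p i).edges (p j).edges := by
    intro u v huv
    set badU := Finset.univ.filter (fun w => w ≠ u ∧ ¬ G.Adj u w) with hbadU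
    set badV := Finset.univ.filter (fun w => w ≠ v ∧ ¬ G.Adj v w) with hbadV
    set B := insert u (insert v (badU ∪ badV)) with hB
    set W := Finset.univ \ B with hW
    have hWspec : ∀ w ∈ W, w ≠ u ∧ w ≠ v ∧ G.Adj u w ∧ G.Adj w v := by
      intro w hw
      simp only [hW, Finset.mem_sdiff, Finset.mem_univ, true_and, hB,
        Finset.mem_insert, Finset.mem_union, hbadU, hbadV, Finset.mem_filter,
        not_or] at hw
      obtain ⟨hwu, hwv, hU, hV⟩ := hw
      refine ⟨hwu, hwv, ?_, ?_⟩
      · by_contra hc; exact hU ⟨hwu, hc⟩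
      · by_contra hc
        exact hV ⟨hwv, fun h => hc h.symm⟩
    have hWcard : n - B.card ≤ W.card := by
      rw [hW, Finset.card_sdiff_of_subset (Finset.subset_univ B)]
      simp
    -- build S : set of "middle vertices"; w = v encodes direct edge
    by_cases hadj : G.Adj u v
    · -- S = insert v W
      have hvW : v ∉ W := by
        intro h; exact (hWspec v h).2.1 rfl
      have hBcard : B.card ≤ 2 * k + 2 := by
        calc B.card ≤ (insert v (badU ∪ badV)).card + 1 := Finset.card_insert_le _ _
          _ ≤ (badU ∪ badV).card + 1 + 1 := by
              have := Finset.card_insert_le v (badU ∪ badV); omega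
          _ ≤ 2 * k + 2 := by
              have := Finset.card_union_le badU badV
              have h1 := hbad u
              have h2 := hbad v
              rw [← hbadU] at h1; rw [← hbadV] at h2
              omega
      have hScard : needed ≤ (insert v W).card := by
        rw [Finset.card_insert_of_notMem hvW]
        omega
      have hSspec : ∀ w ∈ insert v W, w ≠ u ∧
          ((w = v ∧ G.Adj u v) ∨ (w ≠ v ∧ G.Adj u w ∧ G.Adj w v)) := by
        intro w hw
        rcases Finset.mem_insert.mp hw with rfl | hw
        · exact ⟨Ne.symm huv, Or.inl ⟨rfl, hadj⟩⟩
        · obtain ⟨h1, h2, h3, h4⟩ := hWspec w hw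
          exact ⟨h1, Or.inr ⟨h2, h3, h4⟩⟩
      obtain ⟨T, hTS, hTcard⟩ := Finset.exists_subset_card_eq hScard
      set e := T.orderIsoOfFin hTcard with he
      have hinj : Function.Injective (fun i => (e i : Fin n)) := by
        intro i j h
        exact e.injective (Subtype.ext h)
      have hchoice : ∀ i : Fin needed, ∃ q : G.Walk u v, q.IsPath ∧
          (((e i : Fin n) = v ∧ q.edges = [s(u,v)]) ∨
           ((e i : Fin n) ≠ v ∧ q.edges = [s(u,(e i : Fin n)), s((e i : Fin n),v)])) := by
        intro i
        have hm := hSspec (e i : Fin n) (hTS (e i).2)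
        exact exists_path_spec G u v _ huv hm.1 hm.2
      choose p hp1 hp2 using hchoice
      refine ⟨p, hp1, fun i j hij => ?_⟩
      exact edges_disj huv (fun h => hij (hinj h))
        (hSspec _ (hTS (e i).2)).1 (hSspec _ (hTS (e j).2)).1 (hp2 i) (hp2 j)
    · -- not adjacent: v ∈ badU, u ∈ badV, so B = badU ∪ badV
      have hvU : v ∈ badU := by
        simp only [hbadU, Finset.mem_filter, Finset.mem_univ, true_and]
        exact ⟨Ne.symm huv, fun h => hadj h⟩
      have huV : u ∈ badV := by
        simp only [hbadV, Finset.mem_filter, Finset.mem_univ, true_and]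
        exact ⟨huv, fun h => hadj h.symm⟩
      have hBeq : B = badU ∪ badV := by
        rw [hB, Finset.insert_eq_self.mpr, Finset.insert_eq_self.mpr]
        · exact Finset.mem_union_left _ hvU
        · exact Finset.mem_insert_of_mem (Finset.mem_union_right _ huV)
      have hBcard : B.card ≤ 2 * k := by
        rw [hBeq]
        have := Finset.card_union_le badU badV
        have h1 := hbad u
        have h2 := hbad v
        rw [← hbadU] at h1; rw [← hbadV] at h2
        omega
      have hScard : needed ≤ W.card := by omega
      have hSspec : ∀ w ∈ W, w ≠ u ∧
          ((w = v ∧ G.Adj u v) ∨ (w ≠ v ∧ G.Adj u w ∧ G.Adj w v)) := by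
        intro w hw
        obtain ⟨h1, h2, h3, h4⟩ := hWspec w hw
        exact ⟨h1, Or.inr ⟨h2, h3, h4⟩⟩
      obtain ⟨T, hTS, hTcard⟩ := Finset.exists_subset_card_eq hScard
      set e := T.orderIsoOfFin hTcard with he
      have hinj : Function.Injective (fun i => (e i : Fin n)) := by
        intro i j h
        exact e.injective (Subtype.ext h)
      have hchoice : ∀ i : Fin needed, ∃ q : G.Walk u v, q.IsPath ∧
          (((e i : Fin n) = v ∧ q.edges = [s(u,v)]) ∨
           ((e i : Fin n) ≠ v ∧ q.edges = [s(u,(e i : Fin n)), s((e i : Fin n),v)])) := by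
        intro i
        have hm := hSspec (e i : Fin n) (hTS (e i).2)
        exact exists_path_spec G u v _ huv hm.1 hm.2
      choose p hp1 hp2 using hchoice
      refine ⟨p, hp1, fun i j hij => ?_⟩
      exact edges_disj huv (fun h => hij (hinj h))
        (hSspec _ (hTS (e i).2)).1 (hSspec _ (hTS (e j).2)).1 (hp2 i) (hp2 j)
  refine ⟨main, ?_⟩
  intro hpos S hSfin hScard
  have hn2 : 2 ≤ n := by omega
  have : Nonempty (Fin n) := ⟨⟨0, by omega⟩⟩
  refine ⟨fun u v => ?_⟩
  by_cases huv : u = v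
  · subst huv; exact SimpleGraph.Reachable.refl u
  · obtain ⟨p, hpath, hdis⟩ := main u v huv
    have : ∃ i : Fin needed, ∀ e ∈ (p i).edges, e ∉ S := by
      by_contra hc
      push_neg at hc
      choose ed hed1 hed2 using hc
      have hinj : Function.Injective ed := by
        intro i j hij
        by_contra hne
        exact (hdis i j hne) (hed1 i) (hij ▸ hed1 j)
      have : needed ≤ S.ncard := by
        have hcard : needed ≤ hSfin.toFinset.card := by
          have h2 := Fintype.card_le_of_injective
            (fun i : Fin needed =>
              (⟨ed i, (hSfin.mem_toFinset).mpr (hed2 i)⟩ : {x // x ∈ hSfin.toFinset}))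
            (fun i j h => hinj (congrArg Subtype.val h))
          rwa [Fintype.card_coe, Fintype.card_fin] at h2
        rw [Set.ncard_eq_toFinset_card S hSfin]
        exact hcard
      omega
    obtain ⟨i, hi⟩ := this
    exact ⟨(p i).toDeleteEdges S hi⟩
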